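/- Let A be an n × n {+1,-1}-matrix and m an integer with n ≥ m > 1. Let Z(m,A) denote the number of m × m submatrices of A with zero determinant (counted over all C(n,m)² choices of row and column index sets). Then Z(m,A) ≥ C(n,m)·(C(n,m) − 4·(n/4)^m); equivalently, 4^(m-1)·Z(m,A) ≥ C(n,m)·(4^(m-1)·C(n,m) − n^m). -/

import Mathlib

open Matrix Finset Equiv


lemma det_dvd_of_pm1 {m : ℕ} (hm : 0 < m) (M : Matrix (Fin m) (Fin m) ℤ)
    (hM : ∀ i j, M i j = 1 ∨ M i j = -1) : (2:ℤ) ^ (m - 1) ∣ M.det := by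
  set z : Fin m := ⟨0, hm⟩ with hz
  set E : Matrix (Fin m) (Fin m) ℤ :=
    Matrix.of (fun i j => if i = j then 1 else if j = z then -1 else 0) with hE
  have hdetE : E.det = 1 := by
    rw [← Matrix.det_transpose]
    rw [Matrix.det_of_upperTriangular (M := Eᵀ) ?ht]
    · simp [hE]
    case ht =>
      intro i j hij
      have hij' : (j:ℕ) < (i:ℕ) := hij
      have h1 : ¬ j = i := by
        intro h; subst h; exact lt_irrefl _ hij'
      have h2 : ¬ i = z := by
        intro h; rw [h] at hij'; exact Nat.not_lt_zero _ hij'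
      simp [hE, h1, h2]
  set B := E * M with hB
  have hBd : B.det = M.det := by rw [hB, Matrix.det_mul, hdetE, one_mul]
  have hBval : ∀ i j, i ≠ z → B i j = M i j - M z j := by
    intro i j hi
    rw [hB, Matrix.mul_apply]
    have : ∀ k, E i k * M k j = (if k = i then M i j else 0) + (if k = z then -M z j else 0) := by
      intro k
      by_cases h1 : k = i
      · subst h1
        simp [hE, hi]
      · by_cases h2 : k = z
        · rw [h2]
          have h3 : ¬ i = z := hi
          have h5 : ¬ z = i := fun h => hi h.symm
          simp [hE, h3, h5]
        · have h4 : ¬ i = k := fun h => h1 h.symm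
          simp [hE, h4, h2, h1]
    rw [Finset.sum_congr rfl (fun k _ => this k)]
    rw [Finset.sum_add_distrib, Finset.sum_ite_eq' , Finset.sum_ite_eq']
    simp [sub_eq_add_neg]
  have heven : ∀ i j, i ≠ z → (2:ℤ) ∣ B i j := by
    intro i j hi
    rw [hBval i j hi]
    rcases hM i j with h1 | h1 <;> rcases hM z j with h2 | h2 <;> rw [h1, h2] <;> decide
  rw [← hBd, Matrix.det_apply']
  apply Finset.dvd_sum
  intro σ _
  apply Dvd.dvd.mul_left
  have hmem : σ⁻¹ z ∈ (univ : Finset (Fin m)) := mem_univ _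
  rw [Finset.prod_eq_mul_prod_sdiff_singleton_of_mem hmem (fun i => B (σ i) i)]
  apply Dvd.dvd.mul_left
  have hcard : (univ \ {σ⁻¹ z}).card = m - 1 := by
    rw [Finset.card_sdiff_of_subset (by simp), Finset.card_singleton, Finset.card_univ, Fintype.card_fin]
  calc (2:ℤ) ^ (m-1) = ∏ _i ∈ univ \ {σ⁻¹ z}, (2:ℤ) := by rw [Finset.prod_const, hcard]
    _ ∣ ∏ i ∈ univ \ {σ⁻¹ z}, B (σ i) i := by
        apply Finset.prod_dvd_prod_of_dvd
        intro i hi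
        apply heven
        intro h
        rw [Finset.mem_sdiff, Finset.mem_singleton] at hi
        exact hi.2 (by rw [← h]; simp)

lemma sq_det_ge {m : ℕ} (hm : 0 < m) (M : Matrix (Fin m) (Fin m) ℤ)
    (hM : ∀ i j, M i j = 1 ∨ M i j = -1) (hd : M.det ≠ 0) :
    (4:ℤ) ^ (m - 1) ≤ M.det ^ 2 := by
  have h1 : (2:ℤ) ^ (m-1) ∣ |M.det| := (dvd_abs _ _).mpr (det_dvd_of_pm1 hm M hM)
  have h2 : (2:ℤ) ^ (m-1) ≤ |M.det| := Int.le_of_dvd (abs_pos.mpr hd) h1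
  calc (4:ℤ) ^ (m-1) = ((2:ℤ)^(m-1))^2 := by rw [← pow_mul, Nat.mul_comm, pow_mul]; norm_num
    _ ≤ |M.det| ^ 2 := pow_le_pow_left₀ (by positivity) h2 2
    _ = M.det ^ 2 := sq_abs _


lemma gram_det_le {m n : ℕ} (hm : 0 < m) (B : Matrix (Fin m) (Fin n) ℝ)
    (hB : ∀ i k, B i k = 1 ∨ B i k = -1) :
    (B * Bᵀ).det ≤ (n:ℝ) ^ m := by
  have hT : Bᵀ = Bᴴ := by
    ext i j; simp [conjTranspose_apply]
  have hps : (B * Bᵀ).PosSemidef := by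
    rw [hT]; exact posSemidef_self_mul_conjTranspose B
  have hherm : (B * Bᵀ).IsHermitian := hps.isHermitian
  set lam := hherm.eigenvalues with hlam
  have hnn : ∀ i, 0 ≤ lam i := fun i => hps.eigenvalues_nonneg i
  have hdet : (B * Bᵀ).det = ∏ i, lam i := by
    have := hherm.det_eq_prod_eigenvalues
    simpa using this
  have htrace : ∑ i, lam i = (m:ℝ) * n := by
    have h1 : (star (hherm.eigenvectorUnitary : Matrix (Fin m) (Fin m) ℝ)) * (B * Bᵀ) *
        (hherm.eigenvectorUnitary : Matrix (Fin m) (Fin m) ℝ)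
        = diagonal (RCLike.ofReal ∘ hherm.eigenvalues) := by
      have := hherm.conjStarAlgAut_star_eigenvectorUnitary
      simpa using this
    have h2 : ((star (hherm.eigenvectorUnitary : Matrix (Fin m) (Fin m) ℝ)) * (B * Bᵀ) *
        (hherm.eigenvectorUnitary : Matrix (Fin m) (Fin m) ℝ)).trace = (B * Bᵀ).trace := by
      rw [Matrix.trace_mul_cycle]
      rw [← Matrix.mul_assoc]
      rw [(Matrix.mem_unitaryGroup_iff).mp (hherm.eigenvectorUnitary).2, Matrix.one_mul]
    rw [h1] at h2
    rw [Matrix.trace_diagonal] at h2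
    have h3 : (B * Bᵀ).trace = (m:ℝ) * n := by
      rw [Matrix.trace]
      have : ∀ i : Fin m, (B * Bᵀ).diag i = (n:ℝ) := by
        intro i
        simp only [Matrix.diag_apply, Matrix.mul_apply, Matrix.transpose_apply]
        have : ∀ k, B i k * B i k = 1 := by
          intro k; rcases hB i k with h | h <;> rw [h] <;> norm_num
        rw [Finset.sum_congr rfl (fun k _ => this k)]
        simp
      rw [Finset.sum_congr rfl (fun i _ => this i)]
      simp [mul_comm]
    rw [h3] at h2
    rw [hlam]
    simpa using h2
  -- AM-GM
  have hamgm : ∏ i, lam i ≤ (n:ℝ) ^ m := by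
    have hw : ∀ i ∈ (univ : Finset (Fin m)), (0:ℝ) ≤ (m:ℝ)⁻¹ := fun _ _ => by positivity
    have hw' : ∑ _i ∈ (univ : Finset (Fin m)), (m:ℝ)⁻¹ = 1 := by
      simp [Finset.sum_const, Finset.card_univ]
      field_simp
    have hz : ∀ i ∈ (univ : Finset (Fin m)), (0:ℝ) ≤ lam i := fun i _ => hnn i
    have key := Real.geom_mean_le_arith_mean_weighted univ (fun _ => (m:ℝ)⁻¹) lam hw hw' hz
    have hrhs : ∑ i, (m:ℝ)⁻¹ * lam i = (n:ℝ) := by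
      rw [← Finset.mul_sum, htrace]
      field_simp
    rw [hrhs] at key
    -- key : ∏ i, lam i ^ (m:ℝ)⁻¹ ≤ n
    have h0 : (0:ℝ) ≤ ∏ i, lam i ^ ((m:ℝ)⁻¹) := by
      apply Finset.prod_nonneg
      intro i _
      exact Real.rpow_nonneg (hnn i) _
    have := pow_le_pow_left₀ h0 key m
    calc ∏ i, lam i = (∏ i, lam i ^ ((m:ℝ)⁻¹)) ^ m := by
          rw [← Finset.prod_pow]
          apply Finset.prod_congr rfl
          intro i _
          rw [← Real.rpow_natCast (lam i ^ ((m:ℝ)⁻¹)) m, ← Real.rpow_mul (hnn i)]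
          rw [inv_mul_cancel₀ (by exact_mod_cast hm.ne' : (m:ℝ) ≠ 0)]
          exact (Real.rpow_one _).symm
      _ ≤ (n:ℝ) ^ m := this
  rw [hdet]
  exact hamgm


lemma sum_sq_det_all {m n : ℕ} (B : Matrix (Fin m) (Fin n) ℝ) :
    ∑ g : Fin m → Fin n, ((B.submatrix id g).det)^2
      = (Nat.factorial m : ℝ) * (B * Bᵀ).det := by
  have hdet : ∀ g : Fin m → Fin n, (B.submatrix id g).det
      = ∑ σ : Perm (Fin m), ((Perm.sign σ : ℤ) : ℝ) * ∏ i, B (σ i) (g i) := by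
    intro g
    rw [Matrix.det_apply']
    rfl
  have step1 : ∑ g : Fin m → Fin n, ((B.submatrix id g).det)^2
      = ∑ σ : Perm (Fin m), ∑ τ : Perm (Fin m),
          ((Perm.sign σ : ℤ) : ℝ) * ((Perm.sign τ : ℤ) : ℝ) *
            ∏ i, (B * Bᵀ) (σ i) (τ i) := by
    have : ∀ g : Fin m → Fin n, ((B.submatrix id g).det)^2
        = ∑ σ : Perm (Fin m), ∑ τ : Perm (Fin m),
            ((Perm.sign σ : ℤ) : ℝ) * ((Perm.sign τ : ℤ) : ℝ) *
            ∏ i, (B (σ i) (g i) * B (τ i) (g i)) := by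
      intro g
      rw [hdet g, sq, Finset.sum_mul_sum]
      apply Finset.sum_congr rfl; intro σ _
      apply Finset.sum_congr rfl; intro τ _
      rw [Finset.prod_mul_distrib]
      ring
    rw [Finset.sum_congr rfl (fun g _ => this g)]
    rw [Finset.sum_comm]
    apply Finset.sum_congr rfl; intro σ _
    rw [Finset.sum_comm]
    apply Finset.sum_congr rfl; intro τ _
    rw [← Finset.mul_sum]
    congr 1
    -- ∑ g, ∏ i, (B (σ i) (g i) * B (τ i) (g i)) = ∏ i, (B*Bᵀ) (σ i) (τ i)
    have := Finset.prod_univ_sum (fun _ : Fin m => (univ : Finset (Fin n)))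
      (fun i k => B (σ i) k * B (τ i) k)
    rw [Fintype.piFinset_univ] at this
    rw [← this]
    apply Finset.prod_congr rfl
    intro i _
    rw [Matrix.mul_apply]
    rfl
  rw [step1]
  have step2 : ∀ σ : Perm (Fin m), ∑ τ : Perm (Fin m),
      ((Perm.sign σ : ℤ) : ℝ) * ((Perm.sign τ : ℤ) : ℝ) * ∏ i, (B * Bᵀ) (σ i) (τ i)
      = (B * Bᵀ).det := by
    intro σ
    rw [← Equiv.sum_comp (Equiv.mulRight σ) (fun τ => ((Perm.sign σ : ℤ) : ℝ) *
      ((Perm.sign τ : ℤ) : ℝ) * ∏ i, (B * Bᵀ) (σ i) (τ i))]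
    have : ∀ π : Perm (Fin m),
        ((Perm.sign σ : ℤ) : ℝ) * ((Perm.sign ((Equiv.mulRight σ) π) : ℤ) : ℝ) *
          ∏ i, (B * Bᵀ) (σ i) (((Equiv.mulRight σ) π) i)
        = ((Perm.sign π : ℤ) : ℝ) * ∏ j, (B * Bᵀ) j (π j) := by
      intro π
      have h1 : ((Equiv.mulRight σ) π) = π * σ := rfl
      rw [h1]
      have h2 : ∏ i, (B * Bᵀ) (σ i) ((π * σ) i) = ∏ j, (B * Bᵀ) j (π j) := by
        rw [← Equiv.prod_comp σ (fun j => (B * Bᵀ) j (π j))]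
        rfl
      rw [h2]
      congr 1
      rw [Perm.sign_mul]
      push_cast
      rcases Int.units_eq_one_or (Perm.sign σ) with h | h <;> rw [h] <;> push_cast <;> ring
    rw [Finset.sum_congr rfl (fun π _ => this π)]
    rw [← Matrix.det_transpose (B * Bᵀ), Matrix.det_apply']
    apply Finset.sum_congr rfl
    intro π _
    congr 1
  rw [Finset.sum_congr rfl (fun σ _ => step2 σ)]
  rw [Finset.sum_const, Finset.card_univ, Fintype.card_perm]
  simp [nsmul_eq_mul]


section aux
variable {m n : ℕ}

lemma sFin_card {g : Fin m → Fin n} (hg : Function.Injective g) :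
    (Finset.image g univ).card = m := by
  rw [Finset.card_image_of_injective _ hg, Finset.card_univ, Fintype.card_fin]

noncomputable def monoPart (g : Fin m → Fin n) (hg : Function.Injective g) : Fin m → Fin n :=
  ((Finset.image g univ).orderEmbOfFin (sFin_card hg) : Fin m → Fin n)

lemma monoPart_strictMono (g : Fin m → Fin n) (hg : Function.Injective g) :
    StrictMono (monoPart g hg) :=
  ((Finset.image g univ).orderEmbOfFin (sFin_card hg)).strictMono

noncomputable def permPart (g : Fin m → Fin n) (hg : Function.Injective g) : Perm (Fin m) :=
  Equiv.ofBijective (fun i => ((Finset.image g univ).orderIsoOfFin (sFin_card hg)).symm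
      ⟨g i, Finset.mem_image_of_mem _ (Finset.mem_univ i)⟩) (by
    rw [Fintype.bijective_iff_injective_and_card]
    refine ⟨fun a b hab => ?_, rfl⟩
    have := congrArg (((Finset.image g univ).orderIsoOfFin (sFin_card hg))) hab
    rw [OrderIso.apply_symm_apply, OrderIso.apply_symm_apply] at this
    exact hg (congrArg Subtype.val this))

lemma monoPart_permPart (g : Fin m → Fin n) (hg : Function.Injective g) :
    ∀ x, monoPart g hg (permPart g hg x) = g x := by
  intro x
  show ((Finset.image g univ).orderEmbOfFin (sFin_card hg)) _ = g x
  rw [permPart, Equiv.ofBijective_apply, ← Finset.coe_orderIsoOfFin_apply,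
    OrderIso.apply_symm_apply]

lemma monoPart_eq (h : Fin m → Fin n) (hsm : StrictMono h) (π : Perm (Fin m))
    (hg : Function.Injective (h ∘ π)) : monoPart (h ∘ π) hg = h := by
  symm
  apply Finset.orderEmbOfFin_unique _ _ hsm
  intro x
  apply Finset.mem_image.mpr
  exact ⟨π.symm x, Finset.mem_univ _, by simp⟩

lemma permPart_eq (h : Fin m → Fin n) (hsm : StrictMono h) (π : Perm (Fin m))
    (hg : Function.Injective (h ∘ π)) : permPart (h ∘ π) hg = π := by
  apply Equiv.ext
  intro i
  apply hsm.injective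
  have h1 := monoPart_permPart (h ∘ π) hg i
  rw [monoPart_eq h hsm π hg] at h1
  exact h1

lemma sum_all_eq_factorial (F : (Fin m → Fin n) → ℝ)
    (hzero : ∀ g, ¬ Function.Injective g → F g = 0)
    (hperm : ∀ (h : Fin m → Fin n) (π : Perm (Fin m)), F (h ∘ π) = F h) :
    ∑ g : Fin m → Fin n, F g
      = (Nat.factorial m : ℝ) * ∑ h : {f : Fin m → Fin n // StrictMono f}, F h.1 := by
  classical
  have hsplit : ∑ g : Fin m → Fin n, F g
      = ∑ g ∈ univ.filter (fun g : Fin m → Fin n => Function.Injective g), F g := by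
    rw [← Finset.sum_filter_add_sum_filter_not univ (fun g => Function.Injective g) F]
    have : ∑ g ∈ univ.filter (fun g : Fin m → Fin n => ¬ Function.Injective g), F g = 0 := by
      apply Finset.sum_eq_zero
      intro g hg
      exact hzero g (Finset.mem_filter.mp hg).2
    rw [this, add_zero]
  rw [hsplit]
  have key : ∑ p : Perm (Fin m) × {f : Fin m → Fin n // StrictMono f}, F p.2.1
      = ∑ g ∈ univ.filter (fun g : Fin m → Fin n => Function.Injective g), F g := by
    refine Finset.sum_bij' (i := fun p _ => (p.2.1 ∘ p.1 : Fin m → Fin n))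
      (j := fun g hg => (permPart g (Finset.mem_filter.mp hg).2,
        ⟨monoPart g (Finset.mem_filter.mp hg).2,
          monoPart_strictMono g (Finset.mem_filter.mp hg).2⟩))
      ?_ ?_ ?_ ?_ ?_
    · intro p _
      simp only [Finset.mem_filter, Finset.mem_univ, true_and]
      exact p.2.2.injective.comp p.1.injective
    · intro g hg
      exact Finset.mem_univ _
    · -- left_inv : j (i p) = p
      intro p _
      have hinj : Function.Injective (p.2.1 ∘ p.1) := p.2.2.injective.comp p.1.injective
      have h2 : monoPart (p.2.1 ∘ p.1) hinj = p.2.1 := monoPart_eq p.2.1 p.2.2 p.1 hinj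
      have h1 : permPart (p.2.1 ∘ p.1) hinj = p.1 := permPart_eq p.2.1 p.2.2 p.1 hinj
      ext1
      · exact h1
      · exact Subtype.ext h2
    · -- right_inv : i (j g) = g
      intro g hg
      funext x
      exact monoPart_permPart g (Finset.mem_filter.mp hg).2 x
    · intro p _
      exact (hperm p.2.1 p.1).symm
  rw [← key]
  rw [show (∑ p : Perm (Fin m) × {f : Fin m → Fin n // StrictMono f}, F p.2.1)
      = ∑ _p : Perm (Fin m), ∑ h : {f : Fin m → Fin n // StrictMono f}, F h.1
    from Fintype.sum_prod_type _]
  rw [Finset.sum_const, Finset.card_univ, Fintype.card_perm, nsmul_eq_mul, Fintype.card_fin]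

end aux
lemma card_strictMono_subtype (m n : ℕ) :
    Fintype.card {f : Fin m → Fin n // StrictMono f} = n.choose m := by
  have e : {f : Fin m → Fin n // StrictMono f} ≃ {s : Finset (Fin n) // s.card = m} := by
    refine
      { toFun := fun f => ⟨Finset.image f.1 univ, by
          rw [Finset.card_image_of_injective _ f.2.injective, Finset.card_univ,
            Fintype.card_fin]⟩
        invFun := fun s => ⟨(s.1.orderEmbOfFin s.2 : Fin m → Fin n),
          (s.1.orderEmbOfFin s.2).strictMono⟩
        left_inv := ?_
        right_inv := ?_ }
    · intro f
      apply Subtype.ext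
      exact (Finset.orderEmbOfFin_unique _
        (fun x => Finset.mem_image_of_mem _ (Finset.mem_univ x)) f.2).symm
    · intro s
      apply Subtype.ext
      apply Finset.coe_injective
      rw [Finset.coe_image, Finset.coe_univ, Set.image_univ]
      exact Finset.range_orderEmbOfFin _ _
  rw [Fintype.card_congr e, Fintype.card_finset_len, Fintype.card_fin]

lemma key_bound {m n : ℕ} (hm : 0 < m) (B : Matrix (Fin m) (Fin n) ℤ)
    (hB : ∀ i k, B i k = 1 ∨ B i k = -1) :
    (4:ℤ) ^ (m-1) * ((univ.filter (fun g : {f : Fin m → Fin n // StrictMono f} =>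
        ¬ (B.submatrix id g.1).det = 0)).card : ℤ) ≤ (n:ℤ) ^ m := by
  classical
  set Br : Matrix (Fin m) (Fin n) ℝ := B.map (Int.cast) with hBr
  have hBrE : ∀ i k, Br i k = 1 ∨ Br i k = -1 := by
    intro i k; rcases hB i k with h|h <;> simp [hBr, h]
  have hcast : ∀ g : Fin m → Fin n, (Br.submatrix id g).det = ((B.submatrix id g).det : ℝ) := by
    intro g
    rw [show Br.submatrix id g = (B.submatrix id g).map (Int.castRingHom ℝ) from by ext i j; rfl]
    exact (RingHom.map_det (Int.castRingHom ℝ) (B.submatrix id g)).symm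
  set F : (Fin m → Fin n) → ℝ := fun g => ((Br.submatrix id g).det)^2 with hF
  have hzero : ∀ g, ¬ Function.Injective g → F g = 0 := by
    intro g hg
    rw [Function.not_injective_iff] at hg
    obtain ⟨a, b, hab, hne⟩ := hg
    have : (Br.submatrix id g).det = 0 := by
      apply Matrix.det_zero_of_column_eq hne
      intro k
      simp [Matrix.submatrix_apply, hab]
    simp [hF, this]
  have hperm : ∀ (h : Fin m → Fin n) (π : Perm (Fin m)), F (h ∘ π) = F h := by
    intro h π
    have h1 : Br.submatrix id (h ∘ π) = (Br.submatrix id h).submatrix id π := by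
      rw [Matrix.submatrix_submatrix]; simp
    rw [hF]
    simp only
    rw [h1, Matrix.det_permute' π, mul_pow]
    rcases Int.units_eq_one_or (Perm.sign π) with hs | hs <;> rw [hs] <;> norm_num
  have hsum := sum_all_eq_factorial F hzero hperm
  have hCB := sum_sq_det_all Br
  have hfac : (Nat.factorial m : ℝ) ≠ 0 := Nat.cast_ne_zero.mpr (Nat.factorial_ne_zero m)
  have hS : ∑ h : {f : Fin m → Fin n // StrictMono f}, F h.1 = (Br * Brᵀ).det := by
    apply mul_left_cancel₀ hfac
    rw [← hsum]
    exact hCB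
  have hle : ∑ h : {f : Fin m → Fin n // StrictMono f}, F h.1 ≤ (n:ℝ)^m := by
    rw [hS]; exact gram_det_le hm Br hBrE
  have hlower : (4:ℝ)^(m-1) * (((univ.filter (fun g : {f : Fin m → Fin n // StrictMono f} =>
        ¬ (B.submatrix id g.1).det = 0)).card : ℕ) : ℝ)
      ≤ ∑ h : {f : Fin m → Fin n // StrictMono f}, F h.1 := by
    calc (4:ℝ)^(m-1) * (((univ.filter (fun g : {f : Fin m → Fin n // StrictMono f} =>
          ¬ (B.submatrix id g.1).det = 0)).card : ℕ) : ℝ)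
        = ∑ _g ∈ (univ.filter (fun g : {f : Fin m → Fin n // StrictMono f} =>
          ¬ (B.submatrix id g.1).det = 0)), (4:ℝ)^(m-1) := by
          rw [Finset.sum_const, nsmul_eq_mul, mul_comm]
      _ ≤ ∑ g ∈ (univ.filter (fun g : {f : Fin m → Fin n // StrictMono f} =>
          ¬ (B.submatrix id g.1).det = 0)), F g.1 := by
          apply Finset.sum_le_sum
          intro g hg
          have hne := (Finset.mem_filter.mp hg).2
          have hsub : ∀ i j, (B.submatrix id g.1) i j = 1 ∨ (B.submatrix id g.1) i j = -1 :=
            fun i j => hB _ _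
          have h4 : (4:ℤ)^(m-1) ≤ ((B.submatrix id g.1).det)^2 := sq_det_ge hm _ hsub hne
          have : F g.1 = (((B.submatrix id g.1).det : ℤ) : ℝ)^2 := by rw [hF]; simp [hcast]
          rw [this]
          exact_mod_cast h4
      _ ≤ ∑ g : {f : Fin m → Fin n // StrictMono f}, F g.1 := by
          apply Finset.sum_le_sum_of_subset_of_nonneg (Finset.subset_univ _)
          intro i _ _
          exact sq_nonneg _
  have := hlower.trans hle
  exact_mod_cast this

/-- For an `n × n` `{±1}`-matrix `A` and `n ≥ m > 1`, the number `Z(m,A)` of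
`m × m` submatrices with zero determinant (over all pairs of strictly monotone
index maps `Fin m → Fin n`) satisfies
`4^(m-1) * Z(m,A) ≥ C(n,m) * (4^(m-1) * C(n,m) - n^m)` (over the integers). -/
theorem zero_minors_count_ge (n m : ℕ) (hm : 1 < m) (hmn : m ≤ n)
    (A : Matrix (Fin n) (Fin n) ℤ) (hA : ∀ i j, A i j = 1 ∨ A i j = -1) :
    (n.choose m : ℤ) * (4 ^ (m - 1) * (n.choose m : ℤ) - (n : ℤ) ^ m) ≤
      4 ^ (m - 1) *
        ((Finset.univ.filter
          (fun p : {f : Fin m → Fin n // StrictMono f} × {g : Fin m → Fin n // StrictMono g} =>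
            (A.submatrix p.1.1 p.2.1).det = 0)).card : ℤ) := by
  have hm0 : 0 < m := Nat.lt_of_lt_of_le Nat.zero_lt_one hm.le
  have hcardT : Fintype.card {f : Fin m → Fin n // StrictMono f} = n.choose m :=
    card_strictMono_subtype m n
  have hsplit : ((Finset.univ.filter
      (fun p : {f : Fin m → Fin n // StrictMono f} × {g : Fin m → Fin n // StrictMono g} =>
        (A.submatrix p.1.1 p.2.1).det = 0)).card : ℕ)
      = ∑ f : {f : Fin m → Fin n // StrictMono f},
          ((Finset.univ.filter (fun g : {g : Fin m → Fin n // StrictMono g} =>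
            (A.submatrix f.1 g.1).det = 0)).card : ℕ) := by
    rw [Finset.card_filter, Fintype.sum_prod_type]
    apply Finset.sum_congr rfl
    intro f _
    rw [Finset.card_filter]
  have hper : ∀ f : {f : Fin m → Fin n // StrictMono f},
      (4:ℤ)^(m-1) * (n.choose m : ℤ) - (n:ℤ)^m
        ≤ 4^(m-1) * ((Finset.univ.filter (fun g : {g : Fin m → Fin n // StrictMono g} =>
            (A.submatrix f.1 g.1).det = 0)).card : ℤ) := by
    intro f
    have key := key_bound hm0 (A.submatrix f.1 id) (fun i k => hA _ _)
    have hrw : ∀ g : Fin m → Fin n, (A.submatrix f.1 id).submatrix id g = A.submatrix f.1 g := by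
      intro g
      rw [Matrix.submatrix_submatrix]
      simp
    simp only [hrw] at key
    have hcompl := Finset.card_filter_add_card_filter_not
      (s := (Finset.univ : Finset {g : Fin m → Fin n // StrictMono g}))
      (p := fun g => (A.submatrix f.1 g.1).det = 0)
    rw [Finset.card_univ, hcardT] at hcompl
    set a := (Finset.univ.filter (fun g : {g : Fin m → Fin n // StrictMono g} =>
      (A.submatrix f.1 g.1).det = 0)).card with ha
    set b := (Finset.univ.filter (fun g : {g : Fin m → Fin n // StrictMono g} =>
      ¬ (A.submatrix f.1 g.1).det = 0)).card with hb
    have hab : (a : ℤ) + b = (n.choose m : ℤ) := by exact_mod_cast hcompl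
    have h1 : (4:ℤ)^(m-1) * (n.choose m : ℤ) = 4^(m-1) * a + 4^(m-1) * b := by
      rw [← hab]; ring
    linarith [key]
  calc (n.choose m : ℤ) * (4 ^ (m - 1) * (n.choose m : ℤ) - (n : ℤ) ^ m)
      = ∑ _f : {f : Fin m → Fin n // StrictMono f},
          ((4:ℤ) ^ (m - 1) * (n.choose m : ℤ) - (n : ℤ) ^ m) := by
        rw [Finset.sum_const, Finset.card_univ, hcardT, nsmul_eq_mul]
    _ ≤ ∑ f : {f : Fin m → Fin n // StrictMono f},
          (4:ℤ)^(m-1) * ((Finset.univ.filter (fun g : {g : Fin m → Fin n // StrictMono g} =>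
            (A.submatrix f.1 g.1).det = 0)).card : ℤ) :=
        Finset.sum_le_sum (fun f _ => hper f)
    _ = 4 ^ (m - 1) * ((Finset.univ.filter
          (fun p : {f : Fin m → Fin n // StrictMono f} × {g : Fin m → Fin n // StrictMono g} =>
            (A.submatrix p.1.1 p.2.1).det = 0)).card : ℤ) := by
        rw [← Finset.mul_sum, hsplit]
        push_cast
        ring
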